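/- For every integer n ≥ 2: 2n + 2 < S(n,0) < 2n + 2 + 1/(2n − 2). Moreover, for every integer k ≥ 1: P(2k+4)/P(2k+2) < S(n,k) < S(n+1,k) < P(2k+2)/P(2k). -/

import Mathlib

/-- Pell numbers: P 0 = 0, P 1 = 1, P (m+2) = 2·P (m+1) + P m. -/
def pell : ℕ → ℕ
  | 0 => 0
  | 1 => 1
  | m + 2 => 2 * pell (m + 1) + pell m

/-- Half-companion Pell numbers: H 0 = 1, H 1 = 1, H (m+2) = 2·H (m+1) + H m. -/
def hpell : ℕ → ℕ
  | 0 => 1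
  | 1 => 1
  | m + 2 => 2 * hpell (m + 1) + hpell m

/-- √(n²−1). -/
noncomputable def sqn (n : ℕ) : ℝ := Real.sqrt ((n : ℝ)^2 - 1)

/-- S(n,0) = (√(n²−1)+1+n)/(√(n²−1)+1−n); for k ≥ 1,
S(n,k) = ((√(n²−1)+1)·P(2k+1) + n·H(2k+1)) / ((√(n²−1)+1)·P(2k−1) + n·H(2k−1)). -/
noncomputable def S (n k : ℕ) : ℝ :=
  if k = 0 then (sqn n + 1 + n) / (sqn n + 1 - n)
  else ((sqn n + 1) * (pell (2*k+1) : ℝ) + n * (hpell (2*k+1) : ℝ)) /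
       ((sqn n + 1) * (pell (2*k-1) : ℝ) + n * (hpell (2*k-1) : ℝ))

lemma pell_add_two (m : ℕ) : pell (m+2) = 2 * pell (m+1) + pell m := rfl
lemma hpell_add_two (m : ℕ) : hpell (m+2) = 2 * hpell (m+1) + hpell m := rfl

lemma pell_pos : ∀ m, 0 < pell (m+1)
  | 0 => one_pos
  | m+1 => by rw [pell_add_two]; have := pell_pos m; omega

lemma hpell_pos : ∀ m, 0 < hpell m
  | 0 => one_pos
  | 1 => one_pos
  | m+2 => by rw [hpell_add_two]; have := hpell_pos (m+1); omega

lemma hpell_eq : ∀ m, hpell (m+1) = pell (m+1) + pell m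
  | 0 => rfl
  | 1 => rfl
  | m+2 => by
      rw [hpell_add_two, hpell_eq (m+1), hpell_eq m, pell_add_two (m+1), pell_add_two m]
      ring

lemma pell_inv : ∀ j : ℕ, ((pell (2*j+2) : ℤ))^2 + 1
    = 2 * (pell (2*j+1) : ℤ) * (pell (2*j+2) : ℤ) + ((pell (2*j+1) : ℤ))^2
  | 0 => by norm_num [pell, pell_add_two]
  | j+1 => by
      have ih := pell_inv j
      have h3 : (pell (2*j+3) : ℤ) = 2 * pell (2*j+2) + pell (2*j+1) := by
        exact_mod_cast congrArg (Nat.cast (R := ℤ)) (pell_add_two (2*j+1))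
      have h4 : (pell (2*j+4) : ℤ) = 2 * pell (2*j+3) + pell (2*j+2) := by
        exact_mod_cast congrArg (Nat.cast (R := ℤ)) (pell_add_two (2*j+2))
      have e1 : 2*(j+1)+2 = 2*j+4 := by ring
      have e2 : 2*(j+1)+1 = 2*j+3 := by ring
      rw [e1, e2, h4, h3]
      linear_combination ih

set_option maxHeartbeats 1000000 in
theorem stmt_11 (n : ℕ) (hn : 2 ≤ n) :
    (2*(n:ℝ) + 2 < S n 0 ∧ S n 0 < 2*(n:ℝ) + 2 + 1/(2*(n:ℝ) - 2)) ∧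
    ∀ k : ℕ, 1 ≤ k →
      (pell (2*k+4) : ℝ) / (pell (2*k+2) : ℝ) < S n k ∧
      S n k < S (n+1) k ∧
      S (n+1) k < (pell (2*k+2) : ℝ) / (pell (2*k) : ℝ) := by
  have hn2 : (2:ℝ) ≤ (n:ℝ) := by exact_mod_cast hn
  -- facts about s = sqn n
  obtain ⟨s, hs_def⟩ : ∃ s : ℝ, s = sqn n := ⟨_, rfl⟩
  have hssq : s^2 = (n:ℝ)^2 - 1 := by rw [hs_def]; exact Real.sq_sqrt (by nlinarith)
  have hs0 : 0 ≤ s := by rw [hs_def]; exact Real.sqrt_nonneg _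
  have hslt : s < (n:ℝ) := by
    refine lt_of_pow_lt_pow_left₀ 2 (by linarith) ?_
    rw [hssq]; nlinarith
  have hsgt : (n:ℝ) - 1 < s := by
    refine lt_of_pow_lt_pow_left₀ 2 hs0 ?_
    rw [hssq]; nlinarith
  have hs1 : 1 < s := by linarith
  -- facts about s' = sqn (n+1)
  obtain ⟨s', hs'_def⟩ : ∃ x : ℝ, x = sqn (n+1) := ⟨_, rfl⟩
  have hcast : ((n+1 : ℕ) : ℝ) = (n:ℝ) + 1 := by push_cast; ring
  have hs'sq : s'^2 = ((n:ℝ)+1)^2 - 1 := by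
    rw [hs'_def, sqn, hcast]
    exact Real.sq_sqrt (by nlinarith)
  have hs'0 : 0 ≤ s' := by rw [hs'_def]; exact Real.sqrt_nonneg _
  have hs'lt : s' < (n:ℝ)+1 := by
    refine lt_of_pow_lt_pow_left₀ 2 (by linarith) ?_
    rw [hs'sq]; nlinarith
  have hs'gt : (n:ℝ) < s' := by
    refine lt_of_pow_lt_pow_left₀ 2 hs'0 ?_
    rw [hs'sq]; nlinarith
  constructor
  · -- part 1
    have hden : 0 < s + 1 - (n:ℝ) := by linarith
    rw [S, if_pos rfl, ← hs_def]
    constructor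
    · rw [lt_div_iff₀ hden]
      have h1 : (2*(n:ℝ)+1)*s < 2*(n:ℝ)^2 + (n:ℝ) - 1 := by
        refine lt_of_pow_lt_pow_left₀ 2 (by nlinarith [hn2]) ?_
        rw [mul_pow, hssq]; linarith [sq_nonneg ((n:ℝ)-2)]
      linarith [h1]
    · have hden2 : (0:ℝ) < 2*(n:ℝ) - 2 := by linarith
      have key2 : 4*(n:ℝ)^3 - 2*(n:ℝ)^2 - 3*(n:ℝ) + 1 < (4*(n:ℝ)^2 - 2*(n:ℝ) - 1)*s := by
        refine lt_of_pow_lt_pow_left₀ 2 (by nlinarith [hn2, sq_nonneg ((n:ℝ)-2)]) ?_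
        rw [mul_pow, hssq]; linarith [sq_nonneg ((n:ℝ)-2)]
      rw [div_lt_iff₀ hden, ← sub_pos]
      have expand : (2*(n:ℝ)+2+1/(2*(n:ℝ)-2))*(s+1-(n:ℝ)) - (s+1+(n:ℝ))
          = ((4*(n:ℝ)^2 - 2*(n:ℝ) - 1)*s - (4*(n:ℝ)^3 - 2*(n:ℝ)^2 - 3*(n:ℝ) + 1))/(2*(n:ℝ)-2) := by
        have hD : 1/(2*(n:ℝ)-2) * (2*(n:ℝ)-2) = 1 := one_div_mul_cancel hden2.ne'
        rw [eq_div_iff hden2.ne']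
        linear_combination (s+1-(n:ℝ)) * hD
      rw [expand]
      exact div_pos (by linarith) hden2
  · -- part 2
    intro k hk
    obtain ⟨j, rfl⟩ : ∃ j, k = j + 1 := ⟨k-1, by omega⟩
    -- abbreviations
    obtain ⟨a, ha_def⟩ : ∃ x : ℝ, x = (pell (2*j+1) : ℝ) := ⟨_, rfl⟩
    obtain ⟨b, hb_def⟩ : ∃ x : ℝ, x = (pell (2*j+2) : ℝ) := ⟨_, rfl⟩
    have ha1 : 1 ≤ a := by
      rw [ha_def]; exact_mod_cast pell_pos (2*j)
    have hb1 : 1 ≤ b := by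
      rw [hb_def]; exact_mod_cast pell_pos (2*j+1)
    have hinv : b^2 + 1 = 2*a*b + a^2 := by
      rw [ha_def, hb_def]; exact_mod_cast pell_inv j
    have hp3 : (pell (2*j+3) : ℝ) = 2*b + a := by
      rw [pell_add_two (2*j+1), ha_def, hb_def]; push_cast; ring
    have hp4 : (pell (2*j+4) : ℝ) = 5*b + 2*a := by
      rw [pell_add_two (2*j+2)]; push_cast; rw [hp3, ← hb_def]; ring
    have hp5 : (pell (2*j+5) : ℝ) = 12*b + 5*a := by
      rw [pell_add_two (2*j+3)]; push_cast; rw [hp3, hp4]; ring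
    have hp6 : (pell (2*j+6) : ℝ) = 29*b + 12*a := by
      rw [pell_add_two (2*j+4)]; push_cast; rw [hp4, hp5]; ring
    have hh3 : (hpell (2*j+3) : ℝ) = 3*b + a := by
      rw [hpell_eq (2*j+2)]; push_cast; rw [hp3, ← hb_def]; ring
    have hp0 : b = 2*a + (pell (2*j) : ℝ) := by
      rw [ha_def, hb_def, pell_add_two (2*j)]; push_cast; ring
    have hh1 : (hpell (2*j+1) : ℝ) = b - a := by
      rw [hpell_eq (2*j)]; push_cast; rw [← ha_def]; linarith [hp0]
    -- index normalization
    have ei1 : 2*(j+1)+1 = 2*j+3 := by ring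
    have ei2 : 2*(j+1)-1 = 2*j+1 := by omega
    have ei3 : 2*(j+1)+4 = 2*j+6 := by ring
    have ei4 : 2*(j+1)+2 = 2*j+4 := by ring
    have ei5 : 2*(j+1) = 2*j+2 := by ring
    have hSn : S n (j+1) = ((s+1)*(2*b+a) + n*(3*b+a)) / ((s+1)*a + n*(b-a)) := by
      rw [S, if_neg (by omega), ← hs_def, ei1, ei2, hp3, hh3, hh1, ← ha_def]
    have hSn1 : S (n+1) (j+1) = ((s'+1)*(2*b+a) + ((n:ℝ)+1)*(3*b+a)) / ((s'+1)*a + ((n:ℝ)+1)*(b-a)) := by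
      rw [S, if_neg (by omega), ← hs'_def, ei1, ei2, hp3, hh3, hh1, ← ha_def, hcast]
    have hba : a ≤ b := by
      rw [ha_def, hb_def]
      exact_mod_cast (by rw [pell_add_two]; omega : pell (2*j+1) ≤ pell (2*j+2))
    have hD1 : 0 < (s+1)*a + (n:ℝ)*(b-a) :=
      add_pos_of_pos_of_nonneg (mul_pos (by linarith) (by linarith))
        (mul_nonneg (by linarith) (by linarith))
    have hD2 : 0 < (s'+1)*a + ((n:ℝ)+1)*(b-a) :=
      add_pos_of_pos_of_nonneg (mul_pos (by linarith) (by linarith))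
        (mul_nonneg (by linarith) (by linarith))
    refine ⟨?_, ?_, ?_⟩
    · -- lower bound
      rw [hSn, ei3, ei4, hp6, hp4, div_lt_div_iff₀ (by linarith) hD1]
      have key : (29*b+12*a) * ((s+1)*a + (n:ℝ)*(b-a))
          - ((s+1)*(2*b+a) + (n:ℝ)*(3*b+a)) * (5*b+2*a)
          = 10*(s+1) - 14*(n:ℝ) := by linear_combination (14*(n:ℝ) - 10*(s+1)) * hinv
      have h5s : 5*s < 7*(n:ℝ) - 5 := by
        refine lt_of_pow_lt_pow_left₀ 2 (by linarith) ?_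
        rw [mul_pow, hssq]; linarith [sq_nonneg ((n:ℝ)-2)]
      linarith [key]
    · -- monotone in n
      rw [hSn, hSn1, div_lt_div_iff₀ hD1 hD2]
      have key : ((s+1)*(2*b+a) + (n:ℝ)*(3*b+a)) * ((s'+1)*a + ((n:ℝ)+1)*(b-a))
          - ((s'+1)*(2*b+a) + ((n:ℝ)+1)*(3*b+a)) * ((s+1)*a + (n:ℝ)*(b-a))
          = -2*((s+1)*((n:ℝ)+1) - (s'+1)*(n:ℝ)) := by
        linear_combination (2*((s+1)*((n:ℝ)+1) - (s'+1)*(n:ℝ))) * hinv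
      have hsn1 : (n:ℝ)+1 ≤ s*((n:ℝ)+1) := by
        have h := mul_le_mul_of_nonneg_right (le_of_lt hs1) (by linarith : (0:ℝ) ≤ (n:ℝ)+1)
        linarith [h]
      have hmono : (n:ℝ)*s' < s*((n:ℝ)+1) + 1 := by
        refine lt_of_pow_lt_pow_left₀ 2 (by linarith) ?_
        have e : (s*((n:ℝ)+1)+1)^2 = s^2*((n:ℝ)+1)^2 + 2*(s*((n:ℝ)+1)) + 1 := by ring
        have e2 : ((n:ℝ)*s')^2 = (n:ℝ)^2 * s'^2 := by ring
        rw [e, e2, hssq, hs'sq]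
        linarith [hsn1]
      linarith [key, hmono]
    · -- upper bound
      have hpe2 : (pell (2*j+4) : ℝ) = (2*b+a) + (3*b+a) := by rw [hp4]; ring
      have hpe0 : b = a + (b-a) := by ring
      rw [hSn1, ei4, ei5, hp4, ← hb_def, div_lt_div_iff₀ hD2 (by linarith : (0:ℝ) < b)]
      have key : ((s'+1)*(2*b+a) + ((n:ℝ)+1)*(3*b+a)) * b
          - (5*b+2*a) * ((s'+1)*a + ((n:ℝ)+1)*(b-a))
          = -2*((s'+1) - ((n:ℝ)+1)) := by
        linear_combination (2*((s'+1) - ((n:ℝ)+1))) * hinv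
      linarith [key, hs'gt]
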